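/- Let μ and δ be as in Tolsa's theory and g ∈ L²_loc(μ). Fix doubling cubes Q ⊂ R. Let a₁ = |g − m_R(g)|²/(g − m_R(g)) · χ_{Q ∩ {g ≠ m_R(g)}}, a₂ = C_R χ_R with C_R chosen so that b := a₁ + a₂ has μ-integral zero. Then |C_R| μ(R) = |∫_Q a₁ dμ| ≤ ‖a₁‖_{L²(μ)} [μ(Q)]^{1/2} and b is a (2,1)-atomic block with |b|_{H^{1,2}_{atb}(μ)} ≤ C‖a₁‖_{L²(μ)}[μ(Q)]^{1/2}(1 + δ(Q,R)). -/

import Mathlib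

open MeasureTheory Metric Set Filter ENNReal

noncomputable section

abbrev Euc (d : ℕ) := EuclideanSpace ℝ (Fin d)

/-- The closed axis-parallel cube with center `c` and side length `l`. -/
def cube {d : ℕ} (c : Euc d) (l : ℝ) : Set (Euc d) := {y | ∀ i, |y i - c i| ≤ l / 2}

/-- The polynomial growth condition `μ(B(x,r)) ≤ C rⁿ`. -/
def GrowthCond {d : ℕ} (μ : Measure (Euc d)) (C n : ℝ) : Prop :=
  ∀ (x : Euc d) (r : ℝ), 0 < r → μ (Metric.ball x r) ≤ ENNReal.ofReal (C * r ^ n)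

/-- The side length of `Q_R`, the smallest cube concentric with `Q` containing `Q ∪ R`. -/
def sideQR {d : ℕ} (cQ : Euc d) (lQ : ℝ) (cR : Euc d) (lR : ℝ) : ℝ :=
  sInf {t : ℝ | lQ ≤ t ∧ cube cR lR ⊆ cube cQ t}

/-- Tolsa's coefficient `δ(Q,R)`. -/
def tolsaDelta {d : ℕ} (μ : Measure (Euc d)) (n : ℝ) (cQ : Euc d) (lQ : ℝ)
    (cR : Euc d) (lR : ℝ) : ℝ :=
  max (∫ x in cube cQ (sideQR cQ lQ cR lR) \ cube cQ lQ, ‖x - cQ‖ ^ (-n) ∂μ)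
      (∫ x in cube cR (sideQR cR lR cQ lQ) \ cube cR lR, ‖x - cR‖ ^ (-n) ∂μ)

/-- The data of a block: `b = λ₁ a₁ + λ₂ a₂`, supported in the cube `R` with
atoms `a_j` supported in cubes `Q_j ⊆ R`. -/
structure BlockData (d : ℕ) where
  b : Euc d → ℝ
  cR : Euc d
  lR : ℝ
  lam : Fin 2 → ℝ
  a : Fin 2 → Euc d → ℝ
  cQ : Fin 2 → Euc d
  lQ : Fin 2 → ℝ

def blockNorm {d : ℕ} (B : BlockData d) : ℝ := |B.lam 0| + |B.lam 1|

/-- `B` is a `(p,γ)`-block (with dilation parameter `η`). -/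
def IsBlock {d : ℕ} (μ : Measure (Euc d)) (n η : ℝ) (p : ℝ≥0∞) (γ : ℕ)
    (B : BlockData d) : Prop :=
  0 < B.lR ∧ (∀ j, 0 < B.lQ j) ∧
  Function.support B.b ⊆ cube B.cR B.lR ∧
  (B.b =ᵐ[μ] fun x => B.lam 0 * B.a 0 x + B.lam 1 * B.a 1 x) ∧
  (∀ j, Function.support (B.a j) ⊆ cube (B.cQ j) (B.lQ j)) ∧
  (∀ j, cube (B.cQ j) (B.lQ j) ⊆ cube B.cR B.lR) ∧
  (∀ j, MemLp (B.a j) p μ) ∧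
  (∀ j, eLpNorm (B.a j) p μ ≤ ENNReal.ofReal
    ((μ (cube (B.cQ j) (η * B.lQ j))).toReal ^ (1 / p.toReal - 1) *
     (1 + tolsaDelta μ n (B.cQ j) (B.lQ j) B.cR B.lR) ^ (-(γ : ℝ))))

/-- `B` is a `(p,γ)`-atomic block: a `(p,γ)`-block with vanishing integral. -/
def IsAtomicBlock {d : ℕ} (μ : Measure (Euc d)) (n η : ℝ) (p : ℝ≥0∞) (γ : ℕ)
    (B : BlockData d) : Prop :=
  IsBlock μ n η p γ B ∧ Integrable B.b μ ∧ ∫ x, B.b x ∂μ = 0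

/-- The cube `Q` (center `c`, side `l`) is `(2,Cd)`-doubling. -/
def IsDoubling {d : ℕ} (μ : Measure (Euc d)) (Cd : ℝ) (c : Euc d) (l : ℝ) : Prop :=
  μ (cube c (2 * l)) ≤ ENNReal.ofReal Cd * μ (cube c l)

/-- The μ-mean of `g` over `s`. -/
def meanOn {d : ℕ} (μ : Measure (Euc d)) (g : Euc d → ℝ) (s : Set (Euc d)) : ℝ :=
  (μ s).toReal⁻¹ * ∫ x in s, g x ∂μ

/-- `f = ∑ᵢ (b i).b` with convergence in `L¹(μ)` and summable coefficients. -/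
def L1Decomp {d : ℕ} (μ : Measure (Euc d)) (f : Euc d → ℝ) (b : ℕ → BlockData d) : Prop :=
  Integrable f μ ∧ (∀ i, Integrable (b i).b μ) ∧
  (Summable fun i => ∫ x, |(b i).b x| ∂μ) ∧ (Summable fun i => blockNorm (b i)) ∧
  Tendsto (fun N => ∫ x, |f x - ∑ i ∈ Finset.range N, (b i).b x| ∂μ) atTop (nhds 0)

/-- A decomposition of `f` adapted to the localized space `h¹`:
the `b i` are `(p,γ)`-blocks, which are atomic blocks whenever their supporting
cube lies outside the class `D`. -/
def LocalDecomp {d : ℕ} (μ : Measure (Euc d)) (n η : ℝ) (p : ℝ≥0∞) (γ : ℕ)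
    (D : Set (Euc d × ℝ)) (f : Euc d → ℝ) (b : ℕ → BlockData d) : Prop :=
  L1Decomp μ f b ∧ ∀ i, IsBlock μ n η p γ (b i) ∧
    (((b i).cR, (b i).lR) ∉ D → ∫ x, (b i).b x ∂μ = 0)

lemma isClosed_cube {d : ℕ} (c : Euc d) (l : ℝ) : IsClosed (cube c l) := by
  have : cube c l = ⋂ i, (fun y : Euc d => |y i - c i|) ⁻¹' Set.Iic (l / 2) := by
    ext y; simp [cube]
  rw [this]
  exact isClosed_iInter fun i => IsClosed.preimage
    (((EuclideanSpace.proj (𝕜 := ℝ) i).continuous.sub continuous_const).abs) isClosed_Iic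

lemma measurableSet_cube {d : ℕ} (c : Euc d) (l : ℝ) : MeasurableSet (cube c l) :=
  (isClosed_cube c l).measurableSet

lemma cube_subset_cube {d : ℕ} (c : Euc d) {l l' : ℝ} (h : l ≤ l') :
    cube c l ⊆ cube c l' := fun y hy i => (hy i).trans (by linarith)

lemma cube_subset_ball {d : ℕ} (c : Euc d) {l : ℝ} (hl : 0 < l) :
    cube c l ⊆ Metric.ball c (Real.sqrt d * l + l) := by
  intro y hy
  rw [Metric.mem_ball, dist_eq_norm]
  have hnorm : ‖y - c‖ = Real.sqrt (∑ i, ‖(y - c) i‖ ^ 2) := EuclideanSpace.norm_eq _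
  have hsum : (∑ i, ‖(y - c) i‖ ^ 2) ≤ (d : ℝ) * (l / 2) ^ 2 := by
    calc (∑ i, ‖(y - c) i‖ ^ 2) ≤ ∑ _i : Fin d, (l / 2) ^ 2 := by
          refine Finset.sum_le_sum fun i _ => ?_
          have : ‖(y - c) i‖ = |y i - c i| := by
            simp [Real.norm_eq_abs]
          rw [this]
          have := hy i
          have h0 : (0:ℝ) ≤ |y i - c i| := abs_nonneg _
          nlinarith
      _ = (d : ℝ) * (l / 2) ^ 2 := by simp [mul_comm]
  have h1 : ‖y - c‖ ≤ Real.sqrt ((d : ℝ) * (l / 2) ^ 2) := by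
    rw [hnorm]; exact Real.sqrt_le_sqrt hsum
  have h2 : Real.sqrt ((d : ℝ) * (l / 2) ^ 2) = Real.sqrt d * (l / 2) := by
    rw [Real.sqrt_mul (by positivity), Real.sqrt_sq (by positivity)]
  have hd : (0:ℝ) ≤ Real.sqrt d := Real.sqrt_nonneg _
  nlinarith [h1, h2]

lemma measure_cube_lt_top {d : ℕ} {μ : Measure (Euc d)} {C₀ n : ℝ}
    (hg : GrowthCond μ C₀ n) (c : Euc d) {l : ℝ} (hl : 0 < l) :
    μ (cube c l) < ⊤ := by
  have hr : 0 < Real.sqrt d * l + l := by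
    have : (0:ℝ) ≤ Real.sqrt d := Real.sqrt_nonneg _
    nlinarith
  calc μ (cube c l) ≤ μ (Metric.ball c (Real.sqrt d * l + l)) :=
        measure_mono (cube_subset_ball c hl)
    _ ≤ ENNReal.ofReal (C₀ * (Real.sqrt d * l + l) ^ n) := hg c _ hr
    _ < ⊤ := ENNReal.ofReal_lt_top

lemma tolsaDelta_nonneg {d : ℕ} (μ : Measure (Euc d)) (n : ℝ) (cQ : Euc d) (lQ : ℝ)
    (cR : Euc d) (lR : ℝ) : 0 ≤ tolsaDelta μ n cQ lQ cR lR :=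
  le_max_of_le_left (integral_nonneg fun x => Real.rpow_nonneg (norm_nonneg _) _)

lemma sideQR_self {d : ℕ} (c : Euc d) (l : ℝ) : sideQR c l c l = l := by
  unfold sideQR
  refine le_antisymm (csInf_le ⟨l, fun t ht => ht.1⟩ ⟨le_rfl, subset_rfl⟩)
    (le_csInf ⟨l, le_rfl, subset_rfl⟩ fun t ht => ht.1)

lemma tolsaDelta_self {d : ℕ} (μ : Measure (Euc d)) (n : ℝ) (c : Euc d) (l : ℝ) :
    tolsaDelta μ n c l c l = 0 := by
  unfold tolsaDelta
  rw [sideQR_self, Set.diff_self]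
  simp

/-- the auxiliary construction in the proof of (2.6): with
`a₁ = |g - m_R g|²/(g - m_R g) · χ_{Q ∩ {g ≠ m_R g}}` and `C_R` chosen so that
`b = a₁ + C_R χ_R` has integral zero, one has `|C_R| μ(R) ≤ ‖a₁‖_{L²} μ(Q)^{1/2}` and `b`
is a `(2,1)`-atomic block with `|b|_{H^{1,2}_{atb}} ≤ C ‖a₁‖_{L²} μ(Q)^{1/2} (1+δ(Q,R))`. -/
theorem stmt8 (d : ℕ) (n C₀ Cd : ℝ) (hn : 0 < n) (hnd : n ≤ (d : ℝ))
    (hC₀ : 0 < C₀) (hCd : 1 ≤ Cd) :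
    ∃ C : ℝ, 0 < C ∧
      ∀ (μ : Measure (Euc d)), GrowthCond μ C₀ n →
        ∀ (g : Euc d → ℝ) (cQ cR : Euc d) (lQ lR : ℝ), 0 < lQ → 0 < lR →
          IsDoubling μ Cd cQ lQ → IsDoubling μ Cd cR lR →
          0 < μ (cube cQ lQ) → 0 < μ (cube cR lR) → cube cQ lQ ⊆ cube cR lR →
          IntegrableOn g (cube cR lR) μ →
          ∀ (a₁ : Euc d → ℝ) (CR : ℝ),
            a₁ = (cube cQ lQ ∩ {x | g x ≠ meanOn μ g (cube cR lR)}).indicator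
              (fun x => |g x - meanOn μ g (cube cR lR)| ^ 2 /
                (g x - meanOn μ g (cube cR lR))) →
            MemLp a₁ 2 μ →
            CR = -((μ (cube cR lR)).toReal⁻¹ * ∫ x, a₁ x ∂μ) →
            |CR| * (μ (cube cR lR)).toReal ≤
              (∫ x, |a₁ x| ^ (2 : ℝ) ∂μ) ^ (1/2 : ℝ) *
                (μ (cube cQ lQ)).toReal ^ (1/2 : ℝ) ∧
            ∃ B : BlockData d, IsAtomicBlock μ n 2 2 1 B ∧
              (B.b = fun x => a₁ x + (cube cR lR).indicator (fun _ => CR) x) ∧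
              blockNorm B ≤ C * (∫ x, |a₁ x| ^ (2 : ℝ) ∂μ) ^ (1/2 : ℝ) *
                (μ (cube cQ lQ)).toReal ^ (1/2 : ℝ) *
                (1 + tolsaDelta μ n cQ lQ cR lR) := by
  have hCd0 : (0:ℝ) < Cd := lt_of_lt_of_le one_pos hCd
  refine ⟨2 * Real.sqrt Cd, by positivity, ?_⟩
  intro μ hgrowth g cQ cR lQ lR hlQ hlR hdQ hdR hμQ hμR hQR hintg a₁ CR ha₁ hmem hCR
  set Q : Set (Euc d) := cube cQ lQ with hQdef
  set R : Set (Euc d) := cube cR lR with hRdef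
  have hQmeas : MeasurableSet Q := measurableSet_cube cQ lQ
  have hRmeas : MeasurableSet R := measurableSet_cube cR lR
  have hμQtop : μ Q ≠ ⊤ := (measure_cube_lt_top hgrowth cQ hlQ).ne
  have hμRtop : μ R ≠ ⊤ := (measure_cube_lt_top hgrowth cR hlR).ne
  have hμ2Qtop : μ (cube cQ (2 * lQ)) ≠ ⊤ :=
    (measure_cube_lt_top hgrowth cQ (by linarith)).ne
  have hμ2Rtop : μ (cube cR (2 * lR)) ≠ ⊤ :=
    (measure_cube_lt_top hgrowth cR (by linarith)).ne
  have hμQr : 0 < (μ Q).toReal := ENNReal.toReal_pos hμQ.ne' hμQtop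
  have hμRr : 0 < (μ R).toReal := ENNReal.toReal_pos hμR.ne' hμRtop
  have hQ2Q : Q ⊆ cube cQ (2 * lQ) := cube_subset_cube cQ (by linarith)
  have hR2R : R ⊆ cube cR (2 * lR) := cube_subset_cube cR (by linarith)
  have hμ2Qr : 0 < (μ (cube cQ (2 * lQ))).toReal :=
    ENNReal.toReal_pos (fun h => hμQ.ne' (le_antisymm (h ▸ measure_mono hQ2Q) (zero_le))) hμ2Qtop
  have hμ2Rr : 0 < (μ (cube cR (2 * lR))).toReal :=
    ENNReal.toReal_pos (fun h => hμR.ne' (le_antisymm (h ▸ measure_mono hR2R) (zero_le))) hμ2Rtop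
  set N : ℝ := (∫ x, |a₁ x| ^ (2 : ℝ) ∂μ) ^ (1/2 : ℝ) with hNdef
  have hN0 : 0 ≤ N := Real.rpow_nonneg
    (integral_nonneg fun x => Real.rpow_nonneg (abs_nonneg _) _) _
  -- eLpNorm of a₁
  have hsn : eLpNorm a₁ 2 μ = ENNReal.ofReal N := by
    rw [hmem.eLpNorm_eq_integral_rpow_norm two_ne_zero ENNReal.ofNat_ne_top, hNdef]
    norm_num [Real.norm_eq_abs]
  -- support of a₁
  have hsupp₁ : Function.support a₁ ⊆ Q := by
    rw [ha₁]
    exact (Set.support_indicator_subset).trans Set.inter_subset_left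
  -- integrability of a₁
  have hint₁ : Integrable a₁ μ := by
    rw [← integrableOn_iff_integrable_of_support_subset hsupp₁]
    have : IsFiniteMeasure (μ.restrict Q) :=
      ⟨by rwa [Measure.restrict_apply_univ, lt_top_iff_ne_top]⟩
    exact memLp_one_iff_integrable.mp
      ((hmem.restrict Q).mono_exponent (by norm_num))
  -- Hölder / Cauchy-Schwarz
  have hholder : ∫ x, |a₁ x| ∂μ ≤ N * (μ Q).toReal ^ (1/2 : ℝ) := by
    have hconj : Real.HolderConjugate 2 2 := Real.HolderConjugate.two_two
    have heq : ∀ x, |a₁ x| = |a₁ x| * Q.indicator (fun _ => (1:ℝ)) x := by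
      intro x
      by_cases hx : x ∈ Q
      · simp [Set.indicator_of_mem hx]
      · have : a₁ x = 0 := Function.notMem_support.mp fun hs => hx (hsupp₁ hs)
        simp [this]
    have hmem_abs : MemLp (fun x => |a₁ x|) (ENNReal.ofReal 2) μ := by
      have : (ENNReal.ofReal 2) = 2 := by norm_num
      rw [this]
      simpa [Real.norm_eq_abs] using hmem.norm
    have hmem_ind : MemLp (Q.indicator fun _ => (1:ℝ)) (ENNReal.ofReal 2) μ := by
      have : (ENNReal.ofReal 2) = 2 := by norm_num
      rw [this]
      exact memLp_indicator_const 2 hQmeas 1 (Or.inr hμQtop)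
    have hH := integral_mul_le_Lp_mul_Lq_of_nonneg hconj
      (Filter.Eventually.of_forall fun x => abs_nonneg (a₁ x))
      (Filter.Eventually.of_forall fun x => Set.indicator_nonneg (fun _ _ => zero_le_one) x)
      hmem_abs hmem_ind
    have hind_sq : ∫ x, (Q.indicator (fun _ => (1:ℝ)) x) ^ (2:ℝ) ∂μ = (μ Q).toReal := by
      have : ∀ x, (Q.indicator (fun _ => (1:ℝ)) x) ^ (2:ℝ) = Q.indicator (fun _ => (1:ℝ)) x := by
        intro x
        by_cases hx : x ∈ Q
        · simp [Set.indicator_of_mem hx]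
        · simp [Set.indicator_of_notMem hx, Real.zero_rpow (two_ne_zero)]
      rw [integral_congr_ae (Filter.Eventually.of_forall this),
        integral_indicator_const (1:ℝ) hQmeas]
      simp [measureReal_def]
    calc ∫ x, |a₁ x| ∂μ = ∫ x, |a₁ x| * Q.indicator (fun _ => (1:ℝ)) x ∂μ :=
          integral_congr_ae (Filter.Eventually.of_forall heq)
      _ ≤ (∫ x, |a₁ x| ^ (2:ℝ) ∂μ) ^ (1/2:ℝ) *
            (∫ x, (Q.indicator (fun _ => (1:ℝ)) x) ^ (2:ℝ) ∂μ) ^ (1/2:ℝ) := hH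
      _ = N * (μ Q).toReal ^ (1/2 : ℝ) := by rw [hind_sq]
  -- first claim
  have hCRmul : |CR| * (μ R).toReal = |∫ x, a₁ x ∂μ| := by
    rw [hCR, abs_neg, abs_mul, abs_inv, abs_of_nonneg ENNReal.toReal_nonneg,
      mul_comm, ← mul_assoc, mul_inv_cancel₀ hμRr.ne', one_mul]
  have habs : |∫ x, a₁ x ∂μ| ≤ ∫ x, |a₁ x| ∂μ := by
    simpa [Real.norm_eq_abs] using norm_integral_le_integral_norm (μ := μ) a₁
  have hfirst : |CR| * (μ R).toReal ≤ N * (μ Q).toReal ^ (1/2 : ℝ) := by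
    rw [hCRmul]; exact habs.trans hholder
  refine ⟨hfirst, ?_⟩
  -- the block
  set δ : ℝ := tolsaDelta μ n cQ lQ cR lR with hδdef
  have hδ0 : 0 ≤ δ := tolsaDelta_nonneg μ n cQ lQ cR lR
  set m2Q : ℝ := (μ (cube cQ (2 * lQ))).toReal with hm2Qdef
  set m2R : ℝ := (μ (cube cR (2 * lR))).toReal with hm2Rdef
  set lam0 : ℝ := N * m2Q ^ (1/2 : ℝ) * (1 + δ) with hlam0def
  set lam1 : ℝ := |CR| * (μ R).toReal ^ (1/2 : ℝ) * m2R ^ (1/2 : ℝ) with hlam1def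
  have hX2Q : (0:ℝ) < m2Q ^ (1/2 : ℝ) := Real.rpow_pos_of_pos hμ2Qr _
  have hX2R : (0:ℝ) < m2R ^ (1/2 : ℝ) := Real.rpow_pos_of_pos hμ2Rr _
  have hXR : (0:ℝ) < (μ R).toReal ^ (1/2 : ℝ) := Real.rpow_pos_of_pos hμRr _
  have hD : (0:ℝ) < 1 + δ := by linarith
  have hlam0_nonneg : 0 ≤ lam0 := by positivity
  have hlam1_nonneg : 0 ≤ lam1 := by positivity
  -- a₁ vanishes a.e. if N = 0
  have ha₁zero : N = 0 → a₁ =ᵐ[μ] 0 := by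
    intro hNz
    have : eLpNorm a₁ 2 μ = 0 := by rw [hsn, hNz]; simp
    exact (eLpNorm_eq_zero_iff hmem.1 two_ne_zero).mp this
  have hlam0zero : lam0 = 0 → N = 0 := by
    intro h
    rcases mul_eq_zero.mp h with h' | h'
    · rcases mul_eq_zero.mp h' with h'' | h''
      · exact h''
      · exact absurd h'' hX2Q.ne'
    · exact absurd h' hD.ne'
  have hlam1zero : lam1 = 0 → CR = 0 := by
    intro h
    rcases mul_eq_zero.mp h with h' | h'
    · rcases mul_eq_zero.mp h' with h'' | h''
      · exact abs_eq_zero.mp h''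
      · exact absurd h'' hXR.ne'
    · exact absurd h' hX2R.ne'
  -- a.e. identity for atom 0
  have hae0 : (fun x => lam0 * (a₁ x / lam0)) =ᵐ[μ] a₁ := by
    rcases eq_or_ne lam0 0 with h | h
    · filter_upwards [ha₁zero (hlam0zero h)] with x hx
      simp [h, hx]
    · filter_upwards with x
      field_simp
  -- pointwise identity for atom 1
  have hae1 : (fun x => lam1 * (R.indicator (fun _ => CR) x / lam1)) =
      fun x => R.indicator (fun _ => CR) x := by
    funext x
    rcases eq_or_ne lam1 0 with h | h
    · simp [h, hlam1zero h]
    · field_simp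
  -- integrability of the indicator part
  have hind_int : Integrable (R.indicator fun _ => CR) μ :=
    (integrable_indicator_iff hRmeas).mpr
      (integrableOn_const hμRtop)
  refine ⟨⟨fun x => a₁ x + R.indicator (fun _ => CR) x, cR, lR, ![lam0, lam1],
    ![fun x => a₁ x / lam0, fun x => R.indicator (fun _ => CR) x / lam1],
    ![cQ, cR], ![lQ, lR]⟩, ⟨?_, ?_, ?_⟩, rfl, ?_⟩
  · -- IsBlock
    refine ⟨hlR, ?_, ?_, ?_, ?_, ?_, ?_, ?_⟩
    · intro j; fin_cases j
      · simpa using hlQ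
      · simpa using hlR
    · refine (Function.support_add _ _).trans (Set.union_subset (hsupp₁.trans hQR) ?_)
      exact Set.support_indicator_subset
    · filter_upwards [hae0] with x hx
      simp only [Matrix.cons_val_zero, Matrix.cons_val_one, Matrix.head_cons]
      rw [hx, congrFun hae1 x]
    · intro j; fin_cases j
      · simp only [Fin.zero_eta, Fin.mk_one, Matrix.cons_val_zero, Matrix.cons_val_one, Matrix.head_cons]
        intro x hx
        apply hsupp₁
        simp only [Function.mem_support, Fin.zero_eta, Fin.mk_one, Matrix.cons_val_zero, Matrix.cons_val_one, Matrix.head_cons] at hx ⊢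
        intro h0
        exact hx (by rw [h0, zero_div])
      · simp only [Fin.zero_eta, Fin.mk_one, Matrix.cons_val_zero, Matrix.cons_val_one, Matrix.head_cons]
        intro x hx
        apply Set.support_indicator_subset (f := fun _ => CR) (s := R)
        simp only [Function.mem_support, Fin.zero_eta, Fin.mk_one, Matrix.cons_val_zero, Matrix.cons_val_one, Matrix.head_cons] at hx ⊢
        intro h0
        exact hx (by rw [h0, zero_div])
    · intro j; fin_cases j
      · simpa using hQR
      · simp
    · intro j; fin_cases j
      · simp only [Fin.zero_eta, Fin.mk_one, Matrix.cons_val_zero, Matrix.cons_val_one, Matrix.head_cons]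
        simpa [div_eq_inv_mul] using hmem.const_mul lam0⁻¹
      · simp only [Fin.zero_eta, Fin.mk_one, Matrix.cons_val_zero, Matrix.cons_val_one, Matrix.head_cons]
        simpa [div_eq_inv_mul] using
          (memLp_indicator_const 2 hRmeas CR (Or.inr hμRtop)).const_mul lam1⁻¹
    · intro j; fin_cases j
      · -- eLpNorm bound for atom 0
        simp only [Fin.zero_eta, Fin.mk_one, Matrix.cons_val_zero, Matrix.cons_val_one, Matrix.head_cons]
        rcases eq_or_ne lam0 0 with h | h
        · have hz : (fun x => a₁ x / lam0) =ᵐ[μ] 0 := by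
            filter_upwards [ha₁zero (hlam0zero h)] with x hx
            simp [hx]
          rw [eLpNorm_congr_ae hz, eLpNorm_zero]
          exact zero_le
        · have hNpos : 0 < N := lt_of_le_of_ne hN0 (fun hc => h (by rw [hlam0def, ← hc]; ring))
          have hc : eLpNorm (fun x => a₁ x / lam0) 2 μ = ENNReal.ofReal (N / lam0) := by
            have : (fun x => a₁ x / lam0) = lam0⁻¹ • a₁ := by
              funext x; simp [div_eq_inv_mul]
            rw [this, eLpNorm_const_smul, hsn,
              Real.enorm_eq_ofReal (inv_nonneg.mpr hlam0_nonneg),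
              ← ENNReal.ofReal_mul (inv_nonneg.mpr hlam0_nonneg), inv_mul_eq_div]
          rw [hc]
          apply ENNReal.ofReal_le_ofReal
          have hlam0pos : 0 < lam0 := lt_of_le_of_ne hlam0_nonneg (Ne.symm h)
          have hval : N / lam0 = (m2Q ^ (1/2:ℝ))⁻¹ * (1 + δ)⁻¹ := by
            rw [hlam0def]
            field_simp
          rw [hval]
          have h1 : (1 / (2:ℝ≥0∞).toReal - 1) = -(1/2 : ℝ) := by norm_num
          rw [h1, Real.rpow_neg hμ2Qr.le]
          have h2 : (1 + tolsaDelta μ n cQ lQ cR lR) ^ (-((1:ℕ) : ℝ))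
              = (1 + δ)⁻¹ := by
            rw [← hδdef]
            norm_num [Real.rpow_neg_one]
          rw [h2]
      · -- eLpNorm bound for atom 1
        simp only [Fin.zero_eta, Fin.mk_one, Matrix.cons_val_zero, Matrix.cons_val_one, Matrix.head_cons]
        rcases eq_or_ne CR 0 with h | h
        · have hz : (fun x => R.indicator (fun _ => CR) x / lam1) = 0 := by
            funext x; simp [h]
          rw [hz, eLpNorm_zero]
          exact zero_le
        · have hCRpos : 0 < |CR| := abs_pos.mpr h
          have hlam1pos : 0 < lam1 := by
            rw [hlam1def]; positivity
          have hfun : (fun x => R.indicator (fun _ => CR) x / lam1)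
              = R.indicator (fun _ => CR / lam1) := by
            funext x
            by_cases hx : x ∈ R
            · simp [Set.indicator_of_mem hx]
            · simp [Set.indicator_of_notMem hx]
          have hμRrw : μ R ^ (1 / (2:ℝ≥0∞).toReal) = ENNReal.ofReal ((μ R).toReal ^ (1/2 : ℝ)) := by
            conv_lhs => rw [← ENNReal.ofReal_toReal hμRtop]
            rw [ENNReal.ofReal_rpow_of_nonneg ENNReal.toReal_nonneg (by positivity)]
            norm_num
          rw [hfun, eLpNorm_indicator_const hRmeas two_ne_zero ENNReal.ofNat_ne_top, hμRrw,
            Real.enorm_eq_ofReal_abs, ← ENNReal.ofReal_mul (abs_nonneg _)]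
          apply ENNReal.ofReal_le_ofReal
          have habsdiv : |CR / lam1| = |CR| / lam1 := by rw [abs_div, abs_of_pos hlam1pos]
          have hval : |CR| / lam1 * (μ R).toReal ^ (1/2:ℝ) = (m2R ^ (1/2:ℝ))⁻¹ := by
            rw [hlam1def]
            field_simp
          rw [habsdiv, hval]
          have h1 : (1 / (2:ℝ≥0∞).toReal - 1) = -(1/2 : ℝ) := by norm_num
          rw [h1, tolsaDelta_self, Real.rpow_neg hμ2Rr.le]
          norm_num
  · -- Integrable b
    exact hint₁.add hind_int
  · -- integral zero
    rw [integral_add hint₁ hind_int, integral_indicator_const CR hRmeas, smul_eq_mul, measureReal_def, hCR]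
    field_simp
    ring
  · -- blockNorm bound
    have hm2Q : m2Q ≤ Cd * (μ Q).toReal := by
      calc m2Q ≤ (ENNReal.ofReal Cd * μ Q).toReal :=
            ENNReal.toReal_mono (ENNReal.mul_ne_top ENNReal.ofReal_ne_top hμQtop) hdQ
        _ = Cd * (μ Q).toReal := by rw [ENNReal.toReal_mul, ENNReal.toReal_ofReal hCd0.le]
    have hm2R : m2R ≤ Cd * (μ R).toReal := by
      calc m2R ≤ (ENNReal.ofReal Cd * μ R).toReal :=
            ENNReal.toReal_mono (ENNReal.mul_ne_top ENNReal.ofReal_ne_top hμRtop) hdR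
        _ = Cd * (μ R).toReal := by rw [ENNReal.toReal_mul, ENNReal.toReal_ofReal hCd0.le]
    have hs : Real.sqrt Cd = Cd ^ (1/2:ℝ) := Real.sqrt_eq_rpow Cd
    have hsnn : (0:ℝ) ≤ Real.sqrt Cd := Real.sqrt_nonneg Cd
    have hA : m2Q ^ (1/2:ℝ) ≤ Real.sqrt Cd * (μ Q).toReal ^ (1/2:ℝ) := by
      rw [hs, ← Real.mul_rpow hCd0.le ENNReal.toReal_nonneg]
      exact Real.rpow_le_rpow ENNReal.toReal_nonneg hm2Q (by norm_num)
    have hB : m2R ^ (1/2:ℝ) ≤ Real.sqrt Cd * (μ R).toReal ^ (1/2:ℝ) := by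
      rw [hs, ← Real.mul_rpow hCd0.le ENNReal.toReal_nonneg]
      exact Real.rpow_le_rpow ENNReal.toReal_nonneg hm2R (by norm_num)
    have hsq : (μ R).toReal ^ (1/2:ℝ) * (μ R).toReal ^ (1/2:ℝ) = (μ R).toReal := by
      rw [← Real.rpow_add hμRr]
      norm_num
    have hXnn : (0:ℝ) ≤ N * (μ Q).toReal ^ (1/2:ℝ) := by positivity
    have hlam0le : lam0 ≤ Real.sqrt Cd * (N * (μ Q).toReal ^ (1/2:ℝ)) * (1 + δ) := by
      rw [hlam0def]
      have h1 : N * m2Q ^ (1/2:ℝ) ≤ N * (Real.sqrt Cd * (μ Q).toReal ^ (1/2:ℝ)) :=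
        mul_le_mul_of_nonneg_left hA hN0
      calc N * m2Q ^ (1/2:ℝ) * (1 + δ)
          ≤ N * (Real.sqrt Cd * (μ Q).toReal ^ (1/2:ℝ)) * (1 + δ) :=
            mul_le_mul_of_nonneg_right h1 hD.le
        _ = Real.sqrt Cd * (N * (μ Q).toReal ^ (1/2:ℝ)) * (1 + δ) := by ring
    have hlam1le : lam1 ≤ Real.sqrt Cd * (N * (μ Q).toReal ^ (1/2:ℝ)) := by
      have h1 : lam1 ≤ |CR| * (μ R).toReal ^ (1/2:ℝ) * (Real.sqrt Cd * (μ R).toReal ^ (1/2:ℝ)) := by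
        rw [hlam1def]
        exact mul_le_mul_of_nonneg_left hB (by positivity)
      have h2 : |CR| * (μ R).toReal ^ (1/2:ℝ) * (Real.sqrt Cd * (μ R).toReal ^ (1/2:ℝ))
          = Real.sqrt Cd * (|CR| * (μ R).toReal) := by
        calc |CR| * (μ R).toReal ^ (1/2:ℝ) * (Real.sqrt Cd * (μ R).toReal ^ (1/2:ℝ))
            = Real.sqrt Cd * (|CR| * ((μ R).toReal ^ (1/2:ℝ) * (μ R).toReal ^ (1/2:ℝ))) := by ring
          _ = Real.sqrt Cd * (|CR| * (μ R).toReal) := by rw [hsq]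
      rw [h2] at h1
      exact h1.trans (mul_le_mul_of_nonneg_left hfirst hsnn)
    have hbn : blockNorm (⟨fun x => a₁ x + R.indicator (fun _ => CR) x, cR, lR, ![lam0, lam1],
        ![fun x => a₁ x / lam0, fun x => R.indicator (fun _ => CR) x / lam1],
        ![cQ, cR], ![lQ, lR]⟩ : BlockData d) = lam0 + lam1 := by
      simp [blockNorm, abs_of_nonneg hlam0_nonneg, abs_of_nonneg hlam1_nonneg]
    rw [hbn]
    have hlam1le' : lam1 ≤ Real.sqrt Cd * (N * (μ Q).toReal ^ (1/2:ℝ)) * (1 + δ) :=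
      hlam1le.trans (le_mul_of_one_le_right (mul_nonneg hsnn hXnn) (by linarith))
    have hsum : lam0 + lam1
        ≤ 2 * (Real.sqrt Cd * (N * (μ Q).toReal ^ (1/2:ℝ)) * (1 + δ)) := by linarith
    calc lam0 + lam1 ≤ 2 * (Real.sqrt Cd * (N * (μ Q).toReal ^ (1/2:ℝ)) * (1 + δ)) := hsum
      _ = 2 * Real.sqrt Cd * N * (μ Q).toReal ^ (1/2:ℝ) * (1 + δ) := by ring

end
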